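/- Let p, q be coprime integers with p, q ≥ 2 and let G_{p,q} = ⟨x, y | x^p = y^q⟩ be the (p,q) torus knot group. Then the center of G_{p,q} is the infinite cyclic subgroup generated by x^p, and the quotient G_{p,q}/Z(G_{p,q}) is isomorphic to the free product ℤ/p * ℤ/q. -/

import Mathlib

open Monoid

/-! ### Auxiliary: ext lemma for monoid homs out of `Multiplicative (ZMod n)` -/

theorem multZMod_hom_ext {n : ℕ} [NeZero n] {H : Type*} [Monoid H]
    {f g : Multiplicative (ZMod n) →* H}
    (h : f (Multiplicative.ofAdd 1) = g (Multiplicative.ofAdd 1)) : f = g := by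
  refine MonoidHom.ext fun a => ?_
  have ha : a = Multiplicative.ofAdd ((a.toAdd.val) • (1 : ZMod n)) := by
    simp only [nsmul_eq_mul, Nat.cast_id, mul_one]
    rw [ZMod.natCast_rightInverse a.toAdd]
    rfl
  rw [ha, ofAdd_nsmul, map_pow, map_pow, h]

/-! ### Auxiliary: hom from `Multiplicative (ZMod n)` out of an element with `x ^ n = 1` -/

/-- The monoid hom `Multiplicative (ZMod n) →* H` sending the generator to `x`,
given `x ^ n = 1`. -/
noncomputable def zmodLiftHom {H : Type*} [Group H] (n : ℕ) (x : H) (hx : x ^ n = 1) :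
    Multiplicative (ZMod n) →* H :=
  AddMonoidHom.toMultiplicativeLeft
    (ZMod.lift n ⟨MonoidHom.toAdditiveRight (zpowersHom H x),
      by simpa [MonoidHom.toAdditiveRight] using congrArg Additive.ofMul hx⟩)

@[simp]
theorem zmodLiftHom_apply_one {H : Type*} [Group H] (n : ℕ) (x : H) (hx : x ^ n = 1) :
    zmodLiftHom n x hx (Multiplicative.ofAdd 1) = x := by
  have h1 : (1 : ZMod n) = ((1 : ℤ) : ZMod n) := by push_cast; rfl
  simp only [zmodLiftHom, AddMonoidHom.coe_toMultiplicativeLeft, Function.comp_apply]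
  rw [show (Multiplicative.ofAdd (1 : ZMod n)).toAdd = ((1 : ℤ) : ZMod n) from h1]
  rw [ZMod.lift_coe]
  simp [MonoidHom.toAdditiveRight]

open Monoid CoprodI

/-- length of rcons -/
theorem rcons_length {ι : Type*} [DecidableEq ι] {G : ι → Type*} [∀ i, Group (G i)]
    [∀ i, DecidableEq (G i)] {i : ι} (p : Word.Pair G i) :
    (Word.rcons p).toList.length ≤ p.tail.toList.length + 1 := by
  rw [Word.rcons]
  split <;> simp [Word.cons]

theorem coprodI_central_eq_one {ι : Type*} [DecidableEq ι] {G : ι → Type*} [∀ i, Group (G i)]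
    {i₀ j₀ : ι} (hij : i₀ ≠ j₀) (a : G i₀) (ha : a ≠ 1)
    (b : G j₀) (hb : b ≠ 1) {g : CoprodI G} (hg : ∀ x : CoprodI G, g * x = x * g) : g = 1 := by
  classical
  by_contra hg1
  set w : Word G := Word.equiv g with hw
  have hprod : w.prod = g := Word.equiv.symm_apply_apply g
  have hne : w.toList ≠ [] := by
    intro h
    apply hg1
    have hwe : w = Word.empty := Word.ext h
    rw [← hprod, hwe, Word.prod_empty]
  set j := (w.toList.getLast hne).1 with hj
  obtain ⟨k, x, hx1, hkj⟩ : ∃ k, ∃ x : G k, x ≠ 1 ∧ k ≠ j := by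
    by_cases h : i₀ = j
    · exact ⟨j₀, b, hb, fun hh => hij (h ▸ hh ▸ rfl)⟩
    · exact ⟨i₀, a, ha, h⟩
  -- the appended word
  have hchain : (w.toList ++ [(⟨k, x⟩ : Σ i, G i)]).Chain' fun l l' => l.1 ≠ l'.1 := by
    refine List.IsChain.append w.chain_ne (List.isChain_singleton _) ?_
    rintro l hl l' hl'
    simp only [List.head?_cons, Option.mem_def, Option.some.injEq] at hl'
    rw [List.getLast?_eq_getLast hne, Option.mem_def, Option.some.injEq] at hl
    subst hl; subst hl'
    exact fun hh => hkj hh.symm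
  set w' : Word G := ⟨w.toList ++ [(⟨k, x⟩ : Σ i, G i)], by
      intro l hl
      rcases List.mem_append.1 hl with h | h
      · exact w.ne_one l h
      · simp only [List.mem_singleton] at h; subst h; exact hx1, hchain⟩ with hw'
  have hprod' : w'.prod = g * of x := by
    rw [Word.prod, hw']
    simp only [List.map_append, List.prod_append, List.map_singleton, List.prod_singleton]
    rw [← hprod]; rfl
  have h1 : Word.equiv (g * of x) = w' := by
    rw [Equiv.apply_eq_iff_eq_symm_apply]
    exact hprod'.symm
  have h2 : Word.equiv (of x * g) = of x • w := by
    have hps : Word.prod (of x • w) = of x * g := by rw [Word.prod_smul, hprod]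
    rw [Equiv.apply_eq_iff_eq_symm_apply]
    exact hps.symm
  have key : of x • w = w' := by rw [← h2, ← h1, hg (of x)]
  have hlenkey : (of x • w).toList.length = w.toList.length + 1 := by
    rw [key, hw']; simp
  by_cases hf : w.fstIdx = some k
  · -- length contradiction
    set p := Word.equivPair k w with hp
    have hrw : Word.rcons p = w := by
      rw [hp, ← Word.equivPair_symm, Equiv.symm_apply_apply]
    have hph : p.head ≠ 1 := by
      intro h
      rw [Word.rcons, dif_pos h] at hrw
      exact p.fstIdx_ne (hrw ▸ hf)
    have hlen : w.toList.length = p.tail.toList.length + 1 := by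
      rw [← hrw, Word.rcons, dif_neg hph]; simp [Word.cons]
    have : (of x • w).toList.length ≤ p.tail.toList.length + 1 := by
      rw [Word.of_smul_def, ← hp]
      exact rcons_length _
    omega
  · -- head contradiction
    have hcons : of x • w = Word.cons x w hf hx1 := by
      rw [Word.of_smul_def, Word.equivPair_eq_of_fstIdx_ne hf, Word.rcons]
      simp only [mul_one]
      rw [dif_neg hx1]
    rw [hcons, hw'] at key
    have hlists : (⟨k, x⟩ : Σ i, G i) :: w.toList = w.toList ++ [⟨k, x⟩] :=
      congrArg Word.toList key
    -- compare heads
    have hhead : (⟨k, x⟩ : Σ i, G i) = w.toList.head hne := by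
      have := congrArg (fun l => l.head? ) hlists
      simp only [List.head?_cons] at this
      rw [List.head?_append_of_ne_nil _ hne ] at this
      · rw [List.head?_eq_head hne] at this
        exact Option.some.inj this
    have : w.fstIdx = some k := by
      rw [Word.fstIdx, List.head?_eq_head hne, ← hhead]
      rfl
    exact hf this



section BoolFam
variable (M N : Type u)

/-- Bool-indexed family for binary coproduct. -/
abbrev boolFam : Bool → Type _ := fun b => cond b M N

instance boolFamGroup [Group M] [Group N] : ∀ b, Group (boolFam M N b)
  | true => ‹Group M›
  | false => ‹Group N›

variable [Group M] [Group N]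

/-- Coprod to CoprodI. -/
def toI : Coprod M N →* CoprodI (boolFam M N) :=
  Coprod.lift (CoprodI.of (M := boolFam M N) (i := true)) (CoprodI.of (M := boolFam M N) (i := false))

/-- CoprodI to Coprod. -/
def ofI : CoprodI (boolFam M N) →* Coprod M N :=
  CoprodI.lift (fun b => match b with | true => Coprod.inl | false => Coprod.inr)

theorem ofI_comp_toI : (ofI M N).comp (toI M N) = MonoidHom.id _ := by
  apply Coprod.hom_ext <;>
    rw [MonoidHom.comp_assoc] <;>
    simp only [toI, Coprod.lift_comp_inl, Coprod.lift_comp_inr] <;>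
    ext x <;>
    simp [ofI]

theorem toI_comp_ofI : (toI M N).comp (ofI M N) = MonoidHom.id _ := by
  apply CoprodI.ext_hom
  intro b
  rw [MonoidHom.comp_assoc]
  cases b <;>
    · simp only [ofI, CoprodI.lift_comp_of]
      ext x
      simp [toI]

theorem coprod_central_eq_one {M N : Type u} [Group M] [Group N] (a : M) (ha : a ≠ 1)
    (b : N) (hb : b ≠ 1) {c : Coprod M N} (hc : ∀ x, c * x = x * c) : c = 1 := by
  have h1 : ∀ u, ofI M N (toI M N u) = u := fun u =>
    DFunLike.congr_fun (ofI_comp_toI M N) u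
  have h2 : ∀ y, toI M N (ofI M N y) = y := fun y =>
    DFunLike.congr_fun (toI_comp_ofI M N) y
  have hinj : Function.Injective (toI M N) := Function.LeftInverse.injective h1
  have hcentral : ∀ y, toI M N c * y = y * toI M N c := by
    intro y
    rw [← h2 y, ← map_mul, ← map_mul, hc]
  have htf : (true : Bool) ≠ false := fun h => Bool.noConfusion h
  have hc1 : toI M N c = 1 :=
    coprodI_central_eq_one (ι := Bool) (G := boolFam M N) (i₀ := true) (j₀ := false)
      htf a ha b hb hcentral
  exact hinj (hc1.trans (map_one _).symm)

/-- Relators for the torus knot group ⟨x, y | x^p = y^q⟩. -/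
def torusRels (p q : ℕ) : Set (FreeGroup (Fin 2)) :=
  {FreeGroup.of 0 ^ p * (FreeGroup.of 1 ^ q)⁻¹}

/-- The (p,q) torus knot group ⟨x, y | x^p = y^q⟩. -/
abbrev TorusKnotGroup (p q : ℕ) := PresentedGroup (torusRels p q)

theorem stmt7 (p q : ℕ) (hp : 2 ≤ p) (hq : 2 ≤ q) (hpq : Nat.Coprime p q) :
    Subgroup.center (TorusKnotGroup p q) =
      Subgroup.zpowers ((PresentedGroup.of 0 : TorusKnotGroup p q) ^ p) ∧
    ¬ IsOfFinOrder ((PresentedGroup.of 0 : TorusKnotGroup p q) ^ p) ∧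
    Nonempty ((TorusKnotGroup p q ⧸ Subgroup.center (TorusKnotGroup p q)) ≃*
      Monoid.Coprod (Multiplicative (ZMod p)) (Multiplicative (ZMod q))) := by
  haveI : Fact (1 < p) := ⟨hp⟩
  haveI : Fact (1 < q) := ⟨hq⟩
  haveI : NeZero p := ⟨by omega⟩
  haveI : NeZero q := ⟨by omega⟩
  set x : TorusKnotGroup p q := PresentedGroup.of 0 with hxd
  set y : TorusKnotGroup p q := PresentedGroup.of 1 with hyd
  set z : TorusKnotGroup p q := x ^ p with hzd
  -- the relation
  have hrel : x ^ p = y ^ q := by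
    have h : (PresentedGroup.mk (torusRels p q)) (FreeGroup.of 0 ^ p * (FreeGroup.of 1 ^ q)⁻¹)
        = 1 :=
      (QuotientGroup.eq_one_iff _).mpr (Subgroup.subset_normalClosure rfl)
    rw [map_mul, map_pow, map_inv, map_pow] at h
    exact mul_inv_eq_one.mp h
  -- z is central
  have hzc : ∀ g : TorusKnotGroup p q, z * g = g * z := by
    intro g
    have hmem : g ∈ Subgroup.centralizer {z} := by
      apply PresentedGroup.generated_by
      intro j
      rw [Subgroup.mem_centralizer_iff]
      intro h hh
      rw [Set.mem_singleton_iff] at hh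
      subst hh
      fin_cases j
      · exact ((Commute.refl x).pow_left p).eq
      · rw [hzd, hrel]
        exact ((Commute.refl y).pow_left q).eq
    exact Subgroup.mem_centralizer_iff.mp hmem z rfl
  have hcom : ∀ g : TorusKnotGroup p q, Commute z g := fun g => hzc g
  -- infinite order via the hom to Multiplicative ℤ
  have hord : ¬ IsOfFinOrder z := by
    set fψ : Fin 2 → Multiplicative ℤ :=
      ![Multiplicative.ofAdd (q : ℤ), Multiplicative.ofAdd (p : ℤ)] with hfψ
    have hψrels : ∀ r ∈ torusRels p q, FreeGroup.lift fψ r = 1 := by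
      intro r hr
      rw [torusRels, Set.mem_singleton_iff] at hr
      subst hr
      simp only [map_mul, map_pow, map_inv, FreeGroup.lift_apply_of]
      rw [show fψ 0 = Multiplicative.ofAdd (q : ℤ) from rfl,
        show fψ 1 = Multiplicative.ofAdd (p : ℤ) from rfl,
        ← ofAdd_nsmul, ← ofAdd_nsmul]
      rw [nsmul_eq_mul, nsmul_eq_mul, mul_comm (q : ℤ) (p : ℤ)]
      push_cast
      simp
    set ψ := PresentedGroup.toGroup hψrels with hψd
    have hψz : ψ z = Multiplicative.ofAdd ((p : ℤ) * q) := by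
      rw [hzd, map_pow, hxd, hψd, PresentedGroup.toGroup.of,
        show fψ 0 = Multiplicative.ofAdd (q : ℤ) from rfl, ← ofAdd_nsmul, nsmul_eq_mul]
    intro h
    have h2 : IsOfFinOrder (ψ z) := ψ.isOfFinOrder h
    rw [hψz] at h2
    obtain ⟨n, hn, he⟩ := isOfFinOrder_iff_pow_eq_one.mp h2
    rw [← ofAdd_nsmul] at he
    have h3 : (n : ℤ) * ((p : ℤ) * q) = 0 := by
      have h5 := congrArg Multiplicative.toAdd he
      simp only [toAdd_ofAdd, toAdd_one, nsmul_eq_mul] at h5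
      exact h5
    have hn' : (0 : ℤ) < n := by exact_mod_cast hn
    have hp' : (0 : ℤ) < p := by exact_mod_cast (by omega : 0 < p)
    have hq' : (0 : ℤ) < q := by exact_mod_cast (by omega : 0 < q)
    have hpos : (0 : ℤ) < (n : ℤ) * ((p : ℤ) * q) := mul_pos hn' (mul_pos hp' hq')
    exact absurd h3 (ne_of_gt hpos)
  -- the hom to the free product
  set A := Multiplicative (ZMod p) with hAd
  set B := Multiplicative (ZMod q) with hBd
  have hA : (Monoid.Coprod.inl (Multiplicative.ofAdd (1 : ZMod p)) : Monoid.Coprod A B) ^ p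
      = 1 := by
    rw [← map_pow, ← ofAdd_nsmul]
    have h0 : p • (1 : ZMod p) = 0 := by
      rw [nsmul_eq_mul, mul_one, ZMod.natCast_self]
    rw [h0]
    simp
  have hB : (Monoid.Coprod.inr (Multiplicative.ofAdd (1 : ZMod q)) : Monoid.Coprod A B) ^ q
      = 1 := by
    rw [← map_pow, ← ofAdd_nsmul]
    have h0 : q • (1 : ZMod q) = 0 := by
      rw [nsmul_eq_mul, mul_one, ZMod.natCast_self]
    rw [h0]
    simp
  set fφ : Fin 2 → Monoid.Coprod A B :=
    ![Monoid.Coprod.inl (Multiplicative.ofAdd 1), Monoid.Coprod.inr (Multiplicative.ofAdd 1)]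
      with hfφ
  have hφrels : ∀ r ∈ torusRels p q, FreeGroup.lift fφ r = 1 := by
    intro r hr
    rw [torusRels, Set.mem_singleton_iff] at hr
    subst hr
    simp only [map_mul, map_pow, map_inv, FreeGroup.lift_apply_of]
    rw [show fφ 0 = Monoid.Coprod.inl (Multiplicative.ofAdd 1) from rfl,
      show fφ 1 = Monoid.Coprod.inr (Multiplicative.ofAdd 1) from rfl, hA, hB]
    simp
  set φ : TorusKnotGroup p q →* Monoid.Coprod A B := PresentedGroup.toGroup hφrels with hφd
  have hφx : φ x = Monoid.Coprod.inl (Multiplicative.ofAdd 1) := PresentedGroup.toGroup.of hφrels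
  have hφy : φ y = Monoid.Coprod.inr (Multiplicative.ofAdd 1) := PresentedGroup.toGroup.of hφrels
  have hφz : φ z = 1 := by rw [hzd, map_pow, hφx, hA]
  -- the quotient
  set Z' := Subgroup.zpowers z with hZ'd
  haveI hZn : Z'.Normal := by
    constructor
    rintro n ⟨m, rfl⟩ g
    refine ⟨m, ?_⟩
    simp only
    exact (mul_inv_eq_iff_eq_mul.mpr (((hcom g).zpow_left m).eq).symm).symm
  have hφZ : ∀ u ∈ Z', φ u = 1 := by
    rintro u ⟨m, rfl⟩
    simp only
    rw [map_zpow, hφz, one_zpow]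
  set φb : (TorusKnotGroup p q ⧸ Z') →* Monoid.Coprod A B := QuotientGroup.lift Z' φ hφZ
    with hφbd
  set X : TorusKnotGroup p q ⧸ Z' := QuotientGroup.mk x with hXd
  set Y : TorusKnotGroup p q ⧸ Z' := QuotientGroup.mk y with hYd
  have hXp : X ^ p = 1 := by
    rw [hXd, ← QuotientGroup.mk_pow, QuotientGroup.eq_one_iff]
    exact Subgroup.mem_zpowers z
  have hYq : Y ^ q = 1 := by
    rw [hYd, ← QuotientGroup.mk_pow, QuotientGroup.eq_one_iff, ← hrel]
    exact Subgroup.mem_zpowers z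
  set χ : Monoid.Coprod A B →* TorusKnotGroup p q ⧸ Z' :=
    Monoid.Coprod.lift (zmodLiftHom p X hXp) (zmodLiftHom q Y hYq) with hχd
  have hφbmk : ∀ g : TorusKnotGroup p q, φb (QuotientGroup.mk g) = φ g := fun g => rfl
  have hcomp1 : φb.comp χ = MonoidHom.id _ := by
    apply Monoid.Coprod.hom_ext
    · rw [MonoidHom.comp_assoc, hχd, Monoid.Coprod.lift_comp_inl]
      apply multZMod_hom_ext
      rw [MonoidHom.comp_apply, zmodLiftHom_apply_one, hXd, hφbmk, hφx]
      rfl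
    · rw [MonoidHom.comp_assoc, hχd, Monoid.Coprod.lift_comp_inr]
      apply multZMod_hom_ext
      rw [MonoidHom.comp_apply, zmodLiftHom_apply_one, hYd, hφbmk, hφy]
      rfl
  have hcomp2 : χ.comp φb = MonoidHom.id _ := by
    apply QuotientGroup.monoidHom_ext
    apply PresentedGroup.ext
    intro i
    fin_cases i
    · show χ (φb (QuotientGroup.mk x)) = QuotientGroup.mk x
      rw [hφbmk, hφx, hχd, Monoid.Coprod.lift_apply_inl, zmodLiftHom_apply_one]
    · show χ (φb (QuotientGroup.mk y)) = QuotientGroup.mk y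
      rw [hφbmk, hφy, hχd, Monoid.Coprod.lift_apply_inr, zmodLiftHom_apply_one]
  have hinjφb : Function.Injective φb :=
    Function.LeftInverse.injective (fun u => DFunLike.congr_fun hcomp2 u)
  -- center = Z'
  have hcenter : Subgroup.center (TorusKnotGroup p q) = Z' := by
    apply le_antisymm
    · intro g hg
      have hgc := Subgroup.mem_center_iff.mp hg
      have hbar : ∀ s : TorusKnotGroup p q ⧸ Z',
          (QuotientGroup.mk g : TorusKnotGroup p q ⧸ Z') * s
            = s * (QuotientGroup.mk g : TorusKnotGroup p q ⧸ Z') := by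
        intro s
        obtain ⟨h, rfl⟩ := QuotientGroup.mk_surjective s
        rw [← QuotientGroup.mk_mul, ← QuotientGroup.mk_mul, (hgc h).symm]
      have hcC : ∀ t : Monoid.Coprod A B,
          φb (QuotientGroup.mk g) * t = t * φb (QuotientGroup.mk g) := by
        intro t
        have ht : φb (χ t) = t := DFunLike.congr_fun hcomp1 t
        rw [← ht, ← map_mul, ← map_mul, hbar]
      have ha1 : (Multiplicative.ofAdd (1 : ZMod p)) ≠ 1 := by
        intro hcon
        have : (1 : ZMod p) = 0 := hcon
        exact one_ne_zero this
      have hb1 : (Multiplicative.ofAdd (1 : ZMod q)) ≠ 1 := by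
        intro hcon
        have : (1 : ZMod q) = 0 := hcon
        exact one_ne_zero this
      have h1 : φb (QuotientGroup.mk g) = 1 :=
        coprod_central_eq_one _ ha1 _ hb1 hcC
      have h2 : (QuotientGroup.mk g : TorusKnotGroup p q ⧸ Z') = 1 :=
        hinjφb (h1.trans (map_one φb).symm)
      exact (QuotientGroup.eq_one_iff g).mp h2
    · rw [hZ'd]
      exact Subgroup.zpowers_le.mpr (Subgroup.mem_center_iff.mpr (fun g => (hzc g).symm))
  refine ⟨hcenter, hord, ?_⟩
  refine ⟨MulEquiv.trans (QuotientGroup.quotientMulEquivOfEq hcenter) ?_⟩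
  exact MonoidHom.toMulEquiv φb χ hcomp2 hcomp1
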